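/- For integers q ≥ 3, n ≥ 1 and 1 ≤ d ≤ n, set t = n−d+1 and r = min( ⌊(n−t)/2⌋ , ⌊(t−1)/(q−2)⌋ ). Then A_q(n,d) · ∑_{i=0}^{r} C(t+2r, i)·(q−1)^i ≤ q^{t+2r}, where C(t+2r,i) denotes the binomial coefficient. -/

import Mathlib

open Finset

/-- `Aq q n d` is the maximum size of a code over an alphabet of `q` symbols with
length `n` and minimum Hamming distance at least `d`. -/
noncomputable def Aq (q n d : ℕ) : ℕ :=
  sSup {m | ∃ C : Finset (Fin n → Fin q), C.card = m ∧
    ∀ c ∈ C, ∀ c' ∈ C, c ≠ c' → d ≤ hammingDist c c'}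

lemma fiber_card (q m : ℕ) (c : Fin m → Fin q) (S : Finset (Fin m)) :
    (univ.filter (fun x : Fin m → Fin q => ∀ j, x j ≠ c j ↔ j ∈ S)).card
      = (q - 1) ^ S.card := by
  rw [← Fintype.card_subtype]
  rw [Fintype.card_congr (Equiv.subtypePiEquivPi (p := fun j (y : Fin q) => y ≠ c j ↔ j ∈ S))]
  rw [Fintype.card_pi]
  have h : ∀ j, Fintype.card {b : Fin q // b ≠ c j ↔ j ∈ S} = if j ∈ S then q - 1 else 1 := by
    intro j
    by_cases hj : j ∈ S
    · simp only [hj, iff_true, if_true]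
      simp [Fintype.card_subtype_compl]
    · simp only [hj, iff_false, if_false, not_not]
      exact Fintype.card_subtype_eq (c j)
  simp only [h]
  rw [Finset.prod_ite_mem, univ_inter, prod_const]

lemma sphere_card (q m i : ℕ) (c : Fin m → Fin q) :
    (univ.filter fun x : Fin m → Fin q => hammingDist x c = i).card
      = m.choose i * (q - 1) ^ i := by
  have hsplit : (univ.filter fun x : Fin m → Fin q => hammingDist x c = i)
      = (powersetCard i (univ : Finset (Fin m))).biUnion
          (fun S => univ.filter (fun x : Fin m → Fin q => ∀ j, x j ≠ c j ↔ j ∈ S)) := by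
    ext x
    simp only [mem_filter, mem_biUnion, mem_powersetCard, mem_univ, true_and, hammingDist]
    constructor
    · intro hx
      exact ⟨univ.filter (fun j => x j ≠ c j), ⟨subset_univ _, hx⟩,
        fun j => by simp⟩
    · rintro ⟨S, ⟨-, hcard⟩, hS⟩
      have : univ.filter (fun j => x j ≠ c j) = S := by
        ext j; simp [hS j]
      rw [this]; exact hcard
  rw [hsplit, card_biUnion]
  · rw [Finset.sum_congr rfl (fun S hS => by
      rw [fiber_card q m c S, (mem_powersetCard.mp hS).2])]
    rw [sum_const, card_powersetCard, card_univ, Fintype.card_fin, smul_eq_mul]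
  · intro S hS T hT hne
    rw [Function.onFun, Finset.disjoint_left]
    intro x hxS hxT
    apply hne
    ext j
    rw [← (mem_filter.mp hxS).2 j, (mem_filter.mp hxT).2 j]

lemma ball_card (q m r : ℕ) (c : Fin m → Fin q) :
    (univ.filter fun x : Fin m → Fin q => hammingDist x c ≤ r).card
      = ∑ i ∈ Finset.range (r + 1), m.choose i * (q - 1) ^ i := by
  have hsplit : (univ.filter fun x : Fin m → Fin q => hammingDist x c ≤ r)
      = (Finset.range (r + 1)).biUnion
          (fun i => univ.filter fun x : Fin m → Fin q => hammingDist x c = i) := by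
    ext x
    simp [Nat.lt_succ_iff]
  rw [hsplit, card_biUnion]
  · exact Finset.sum_congr rfl fun i _ => sphere_card q m i c
  · intro i _ j _ hij
    rw [Function.onFun, Finset.disjoint_left]
    intro x hxi hxj
    exact hij ((mem_filter.mp hxi).2.symm.trans (mem_filter.mp hxj).2)

lemma packing (q m r : ℕ) (C : Finset (Fin m → Fin q))
    (hC : ∀ c ∈ C, ∀ c' ∈ C, c ≠ c' → 2 * r + 1 ≤ hammingDist c c') :
    C.card * ∑ i ∈ Finset.range (r + 1), m.choose i * (q - 1) ^ i ≤ q ^ m := by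
  classical
  have hdisj : ∀ c ∈ C, ∀ c' ∈ C, c ≠ c' →
      Disjoint (univ.filter fun x : Fin m → Fin q => hammingDist x c ≤ r)
        (univ.filter fun x : Fin m → Fin q => hammingDist x c' ≤ r) := by
    intro c hc c' hc' hne
    rw [Finset.disjoint_left]
    intro x hx hx'
    have h1 := (mem_filter.mp hx).2
    have h2 := (mem_filter.mp hx').2
    have := hammingDist_triangle c x c'
    rw [hammingDist_comm c x] at this
    have : hammingDist c c' ≤ 2 * r := by omega
    have := hC c hc c' hc' hne
    omega
  calc C.card * ∑ i ∈ Finset.range (r + 1), m.choose i * (q - 1) ^ i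
      = ∑ c ∈ C, (univ.filter fun x : Fin m → Fin q => hammingDist x c ≤ r).card := by
        rw [Finset.sum_congr rfl fun c _ => ball_card q m r c, sum_const, smul_eq_mul]
    _ = (C.biUnion fun c => univ.filter fun x : Fin m → Fin q => hammingDist x c ≤ r).card :=
        (card_biUnion hdisj).symm
    _ ≤ (univ : Finset (Fin m → Fin q)).card := card_le_card (subset_univ _)
    _ = q ^ m := by simp [card_univ]

lemma Aq_bddAbove (q n d : ℕ) : BddAbove {m | ∃ C : Finset (Fin n → Fin q), C.card = m ∧
    ∀ c ∈ C, ∀ c' ∈ C, c ≠ c' → d ≤ hammingDist c c'} := by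
  refine ⟨q ^ n, fun m hm => ?_⟩
  obtain ⟨C, hCm, -⟩ := hm
  calc m = C.card := hCm.symm
    _ ≤ (univ : Finset (Fin n → Fin q)).card := card_le_card (subset_univ _)
    _ = q ^ n := by simp [card_univ]

lemma Aq_exists (q n d : ℕ) : ∃ C : Finset (Fin n → Fin q), C.card = Aq q n d ∧
    ∀ c ∈ C, ∀ c' ∈ C, c ≠ c' → d ≤ hammingDist c c' := by
  have : Aq q n d ∈ {m | ∃ C : Finset (Fin n → Fin q), C.card = m ∧
      ∀ c ∈ C, ∀ c' ∈ C, c ≠ c' → d ≤ hammingDist c c'} :=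
    Nat.sSup_mem ⟨0, ∅, by simp⟩ (Aq_bddAbove q n d)
  exact this

lemma le_Aq (q n d : ℕ) (C : Finset (Fin n → Fin q))
    (hC : ∀ c ∈ C, ∀ c' ∈ C, c ≠ c' → d ≤ hammingDist c c') : C.card ≤ Aq q n d :=
  le_csSup (Aq_bddAbove q n d) ⟨C, rfl, hC⟩

lemma Aq_punct (q n d : ℕ) (hd : 1 ≤ d) : Aq q (n + 1) (d + 1) ≤ Aq q n d := by
  obtain ⟨C, hCcard, hC⟩ := Aq_exists q (n + 1) (d + 1)
  classical
  set f : (Fin (n + 1) → Fin q) → (Fin n → Fin q) := fun c => c ∘ Fin.castSucc with hf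
  have key : ∀ c c' : Fin (n + 1) → Fin q, hammingDist c c' ≤ hammingDist (f c) (f c') + 1 := by
    intro c c'
    have hsub : univ.filter (fun i : Fin (n + 1) => c i ≠ c' i) ⊆
        insert (Fin.last n)
          ((univ.filter (fun j : Fin n => f c j ≠ f c' j)).map Fin.castSuccEmb) := by
      intro i hi
      rw [mem_filter] at hi
      induction i using Fin.lastCases with
      | last => exact mem_insert_self _ _
      | cast j =>
        refine mem_insert_of_mem ?_
        rw [mem_map]
        exact ⟨j, mem_filter.mpr ⟨mem_univ _, hi.2⟩, rfl⟩
    calc hammingDist c c' = (univ.filter (fun i : Fin (n + 1) => c i ≠ c' i)).card := rfl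
      _ ≤ (insert (Fin.last n)
            ((univ.filter (fun j : Fin n => f c j ≠ f c' j)).map Fin.castSuccEmb)).card :=
          card_le_card hsub
      _ ≤ ((univ.filter (fun j : Fin n => f c j ≠ f c' j)).map Fin.castSuccEmb).card + 1 :=
          card_insert_le _ _
      _ = hammingDist (f c) (f c') + 1 := by rw [card_map]; rfl
  have hinj : Set.InjOn f C := by
    intro c hc c' hc' hfe
    by_contra hne
    have h1 := hC c hc c' hc' hne
    have h2 := key c c'
    rw [hfe] at h2
    simp [hammingDist_self] at h2
    omega
  have hCcard' : (C.image f).card = C.card := card_image_of_injOn hinj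
  have hC' : ∀ b ∈ C.image f, ∀ b' ∈ C.image f, b ≠ b' → d ≤ hammingDist b b' := by
    intro b hb b' hb' hne
    obtain ⟨c, hc, rfl⟩ := mem_image.mp hb
    obtain ⟨c', hc', rfl⟩ := mem_image.mp hb'
    have hcc' : c ≠ c' := fun h => hne (by rw [h])
    have h1 := hC c hc c' hc' hcc'
    have h2 := key c c'
    omega
  calc Aq q (n + 1) (d + 1) = C.card := hCcard.symm
    _ = (C.image f).card := hCcard'.symm
    _ ≤ Aq q n d := le_Aq q n d _ hC'


lemma Aq_punct_iter (q n d k : ℕ) (hd : 1 ≤ d) : Aq q (n + k) (d + k) ≤ Aq q n d := by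
  induction k with
  | zero => exact le_refl _
  | succ k ih =>
    calc Aq q (n + (k + 1)) (d + (k + 1)) ≤ Aq q (n + k) (d + k) :=
          Aq_punct q (n + k) (d + k) (le_trans hd (Nat.le_add_right d k))
      _ ≤ Aq q n d := ih

/-- For `q ≥ 3`, with `t = n−d+1` and `r = min(⌊(n−t)/2⌋, ⌊(t−1)/(q−2)⌋)`,
`A_q(n,d) · ∑_{i=0}^{r} C(t+2r,i)·(q−1)^i ≤ q^(t+2r)`. -/
theorem qary_diametric_bound (q n d : ℕ) (hq : 3 ≤ q) (hn : 1 ≤ n) (hd : 1 ≤ d)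
    (hdn : d ≤ n) :
    Aq q n d *
      ∑ i ∈ Finset.range (min ((n - (n - d + 1)) / 2) ((n - d + 1 - 1) / (q - 2)) + 1),
        ((n - d + 1) + 2 * min ((n - (n - d + 1)) / 2) ((n - d + 1 - 1) / (q - 2))).choose i
          * (q - 1) ^ i ≤
      q ^ ((n - d + 1) + 2 * min ((n - (n - d + 1)) / 2) ((n - d + 1 - 1) / (q - 2))) := by
  set r : ℕ := min ((n - (n - d + 1)) / 2) ((n - d + 1 - 1) / (q - 2)) with hr
  set m : ℕ := (n - d + 1) + 2 * r with hm
  -- `2r ≤ d - 1`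
  have hr1 : r ≤ (n - (n - d + 1)) / 2 := min_le_left _ _
  have hnd : n - (n - d + 1) = d - 1 := by omega
  have h2r : 2 * r ≤ d - 1 := by
    rw [hnd] at hr1
    omega
  set k : ℕ := d - 1 - 2 * r with hk
  have hnm : n = m + k := by omega
  have hdk : d = (2 * r + 1) + k := by omega
  have step1 : Aq q n d ≤ Aq q m (2 * r + 1) := by
    rw [hnm, hdk]
    exact Aq_punct_iter q m (2 * r + 1) k (by omega)
  obtain ⟨C, hCcard, hC⟩ := Aq_exists q m (2 * r + 1)
  have step2 := packing q m r C hC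
  calc Aq q n d * ∑ i ∈ Finset.range (r + 1), m.choose i * (q - 1) ^ i
      ≤ Aq q m (2 * r + 1) * ∑ i ∈ Finset.range (r + 1), m.choose i * (q - 1) ^ i :=
        Nat.mul_le_mul_right _ step1
    _ = C.card * ∑ i ∈ Finset.range (r + 1), m.choose i * (q - 1) ^ i := by rw [hCcard]
    _ ≤ q ^ m := step2
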